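/- Let F be a field, G a group, and S, T, U finite subsets of G satisfying the triple product property. Let A : S × T → F and B : T × U → F be arbitrary. In the group algebra F[G], consider the elements Ā = Σ_{s∈S, t∈T} A(s,t)·(s⁻¹t) and B̄ = Σ_{t'∈T, u∈U} B(t',u)·(t'⁻¹u). Then for every s ∈ S and u ∈ U, the coefficient of the group element s⁻¹u in the product Ā·B̄ equals Σ_{t∈T} A(s,t)·B(t,u). -/

import Mathlib

/-- The right quotient set `Q(S) = {s₁s₂⁻¹ : s₁, s₂ ∈ S}` of a subset of a group. -/
def rightQuotient {G : Type*} [Group G] (S : Set G) : Set G :=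
  {g | ∃ s₁ ∈ S, ∃ s₂ ∈ S, g = s₁ * s₂⁻¹}

/-- Subsets `S₁, S₂, S₃` of a group satisfy the triple product property if whenever
`qᵢ ∈ Q(Sᵢ)` and `q₁q₂q₃ = 1`, we have `q₁ = q₂ = q₃ = 1`. -/
def TPP {G : Type*} [Group G] (S₁ S₂ S₃ : Set G) : Prop :=
  ∀ q₁ ∈ rightQuotient S₁, ∀ q₂ ∈ rightQuotient S₂, ∀ q₃ ∈ rightQuotient S₃,
    q₁ * q₂ * q₃ = 1 → q₁ = 1 ∧ q₂ = 1 ∧ q₃ = 1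

/-- A group `G` realizes `⟨n₁, n₂, n₃⟩` if there are finite subsets `Sᵢ ⊆ G` with
`|Sᵢ| = nᵢ` satisfying the triple product property. -/
def Realizes (G : Type*) [Group G] (n₁ n₂ n₃ : ℕ) : Prop :=
  ∃ S₁ S₂ S₃ : Set G, S₁.Finite ∧ S₂.Finite ∧ S₃.Finite ∧
    S₁.ncard = n₁ ∧ S₂.ncard = n₂ ∧ S₃.ncard = n₃ ∧ TPP S₁ S₂ S₃

/-- Key consequence of the triple product property: the only way to write `s⁻¹u` as
`s'⁻¹ t t'⁻¹ u'` is the trivial one (with `t` free). -/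
lemma tpp_key {G : Type*} [Group G] {S T U : Set G} (htpp : TPP S T U)
    {s s' t t' u u' : G} (hs : s ∈ S) (hs' : s' ∈ S) (ht : t ∈ T) (ht' : t' ∈ T)
    (hu : u ∈ U) (hu' : u' ∈ U) :
    s'⁻¹ * t * (t'⁻¹ * u') = s⁻¹ * u ↔ t = t' ∧ s' = s ∧ u' = u := by
  constructor
  · intro h
    have h1 : (s * s'⁻¹) * (t * t'⁻¹) * (u' * u⁻¹) = 1 := by
      have h2 : s * (s'⁻¹ * t * (t'⁻¹ * u')) * u⁻¹ = s * (s⁻¹ * u) * u⁻¹ := by rw [h]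
      group at h2 ⊢
      convert h2 using 1
    obtain ⟨e1, e2, e3⟩ := htpp _ ⟨s, hs, s', hs', rfl⟩ _ ⟨t, ht, t', ht', rfl⟩
      _ ⟨u', hu', u, hu, rfl⟩ h1
    have f1 : s = s' := by have := mul_eq_one_iff_eq_inv.mp e1; simpa using this
    have f2 : t = t' := by have := mul_eq_one_iff_eq_inv.mp e2; simpa using this
    have f3 : u' = u := by have := mul_eq_one_iff_eq_inv.mp e3; simpa using this
    exact ⟨f2, f1.symm, f3⟩
  · rintro ⟨rfl, rfl, rfl⟩; group

/-- Coefficient extraction commutes with finite sums in a monoid algebra. -/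
lemma msum_apply {F : Type*} [Field F] {G : Type*} [Group G] {ι : Type*} (S : Finset ι)
    (f : ι → MonoidAlgebra F G) (x : G) :
    (∑ i ∈ S, f i).coeff x = ∑ i ∈ S, (f i).coeff x := by
  rw [MonoidAlgebra.coeff_sum, Finset.sum_apply']

theorem stmt_2 {F : Type*} [Field F] {G : Type*} [Group G]
    (S T U : Finset G) (htpp : TPP (S : Set G) (T : Set G) (U : Set G))
    (A B : G → G → F) (s : G) (hs : s ∈ S) (u : G) (hu : u ∈ U) :
    (((∑ s' ∈ S, ∑ t ∈ T, MonoidAlgebra.single (s'⁻¹ * t) (A s' t)) *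
        (∑ t' ∈ T, ∑ u' ∈ U, MonoidAlgebra.single (t'⁻¹ * u') (B t' u'))
      : MonoidAlgebra F G)).coeff (s⁻¹ * u) = ∑ t ∈ T, A s t * B t u := by
  classical
  simp only [Finset.sum_mul, Finset.mul_sum, MonoidAlgebra.single_mul_single,
    msum_apply, MonoidAlgebra.single_apply]
  refine Finset.sum_congr rfl fun t' ht' => ?_
  have step : ∀ u' ∈ U, ∀ s' ∈ S, ∀ t ∈ T,
      (if s'⁻¹ * t * (t'⁻¹ * u') = s⁻¹ * u then A s' t * B t' u' else 0) =
      (if t = t' ∧ s' = s ∧ u' = u then A s' t * B t' u' else 0) := by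
    intro u' hu' s' hs' t ht
    exact if_congr (tpp_key htpp hs hs' ht ht' hu hu') rfl rfl
  calc (∑ u' ∈ U, ∑ s' ∈ S, ∑ t ∈ T,
          if s'⁻¹ * t * (t'⁻¹ * u') = s⁻¹ * u then A s' t * B t' u' else 0)
      = ∑ u' ∈ U, ∑ s' ∈ S, ∑ t ∈ T,
          if t = t' ∧ s' = s ∧ u' = u then A s' t * B t' u' else 0 := by
        refine Finset.sum_congr rfl fun u' hu' => Finset.sum_congr rfl fun s' hs' =>
          Finset.sum_congr rfl fun t ht => step u' hu' s' hs' t ht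
    _ = A s t' * B t' u := by
        simp only [ite_and, Finset.sum_ite_eq', ht', if_true, hs, hu]
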